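/- Let f^* ⊣ f_* be an adjunction with f^* : F ⥤ E fully faithful, and let x^* ⊣ x_* be an adjunction with x^* : X ⥤ E. Suppose g^* : X ⥤ F is a functor equipped with a natural isomorphism f^* ∘ g^* ≅ x^*. Then: (i) g^* is left adjoint to the composite x_* ∘ f^* : F ⥤ X; and (ii) x_* ∘ f^* is a left Kan extension of x_* along f_*, i.e. for every functor K : F ⥤ X, composition with f_* induces a bijection between natural transformations x_* ∘ f^* ⟶ K and natural transformations x_* ⟶ K ∘ f_*. (Right Kan extensions of points of a topos along connected geometric morphisms exist, are pointwise, and have direct image x_* ∘ f^*.) -/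

import Mathlib

universe w₁ w₂ w₃ v₁ v₂ v₃

open CategoryTheory

open Category

section Aux


variable {E : Type v₁} [Category.{w₁} E] {F : Type v₂} [Category.{w₂} F]
    {X : Type v₃} [Category.{w₃} X]
    {fstar : F ⥤ E} {fsub : E ⥤ F} (fadj : fstar ⊣ fsub)
    {xstar : X ⥤ E} {xsub : E ⥤ X} (xadj : xstar ⊣ xsub)
    {gstar : X ⥤ F} (i : gstar ⋙ fstar ≅ xstar)

/-- The component `σ_e : x^* x_* e ⟶ f^* f_* e`. -/
def sigmaA (e : E) : xstar.obj (xsub.obj e) ⟶ fstar.obj (fsub.obj e) :=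
  i.inv.app (xsub.obj e) ≫
    fstar.map ((fadj.homEquiv _ _) (i.hom.app (xsub.obj e) ≫ xadj.counit.app e))

lemma sigmaA_natural {e e' : E} (w : e ⟶ e') :
    xstar.map (xsub.map w) ≫ sigmaA fadj xadj i e' =
      sigmaA fadj xadj i e ≫ fstar.map (fsub.map w) := by
  dsimp [sigmaA]
  rw [i.inv.naturality_assoc (xsub.map w)]
  simp only [Functor.comp_map, assoc, ← fstar.map_comp]
  congr 2
  rw [← Adjunction.homEquiv_naturality_left, ← Adjunction.homEquiv_naturality_right]
  congr 1
  rw [← Functor.comp_map, i.hom.naturality_assoc (xsub.map w)]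
  simp

/-- The Kan-extension unit `α : x_* ⟶ f_* ⋙ (f^* ⋙ x_*)`. -/
def alphaA : xsub ⟶ fsub ⋙ (fstar ⋙ xsub) where
  app e := (xadj.homEquiv _ _) (sigmaA fadj xadj i e)
  naturality e e' w := by
    dsimp
    rw [← Adjunction.homEquiv_naturality_left, ← Adjunction.homEquiv_naturality_right,
      sigmaA_natural]

lemma alphaA_app_fstar [fstar.Full] [fstar.Faithful] (f : F) :
    (alphaA fadj xadj i).app (fstar.obj f) = xsub.map (fstar.map (fadj.unit.app f)) := by
  obtain ⟨v, hv⟩ := fstar.map_surjective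
    (i.hom.app (xsub.obj (fstar.obj f)) ≫ xadj.counit.app (fstar.obj f))
  have h1 : sigmaA fadj xadj i (fstar.obj f)
      = xadj.counit.app (fstar.obj f) ≫ fstar.map (fadj.unit.app f) := by
    dsimp [sigmaA]
    rw [← hv, Adjunction.homEquiv_unit, fadj.unit_naturality v]
    rw [fstar.map_comp, reassoc_of% hv]
    simp
  dsimp [alphaA]
  rw [h1, Adjunction.homEquiv_unit]
  simp only [Functor.comp_obj, Functor.map_comp, ← assoc]
  rw [xadj.right_triangle_components]
  simp

lemma fsub_sigmaA [fstar.Full] [fstar.Faithful] (e : E) :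
    fsub.map (sigmaA fadj xadj i e) =
      fsub.map (xadj.counit.app e) ≫ fadj.unit.app (fsub.obj e) := by
  have h := fadj.unit_naturality
    ((fadj.homEquiv (gstar.obj (xsub.obj e)) e) (i.hom.app (xsub.obj e) ≫ xadj.counit.app e))
  rw [← IsIso.eq_inv_comp] at h
  dsimp [sigmaA]
  rw [fsub.map_comp, h]
  rw [Adjunction.homEquiv_unit]
  simp only [Functor.comp_obj, assoc, IsIso.inv_hom_id_assoc, Functor.map_comp]
  rw [← fsub.map_comp_assoc]
  simp

/-- The descent map for the universal property. -/
noncomputable def phiA [fstar.Full] [fstar.Faithful] (K : F ⥤ X) (β : xsub ⟶ fsub ⋙ K) :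
    (fstar ⋙ xsub) ⟶ K where
  app f := β.app (fstar.obj f) ≫ K.map (inv (fadj.unit.app f))
  naturality f f' u := by
    dsimp
    rw [β.naturality_assoc (fstar.map u)]
    dsimp
    rw [assoc, ← K.map_comp, ← K.map_comp]
    congr 1
    congr 1
    rw [IsIso.comp_inv_eq, assoc, IsIso.eq_inv_comp]
    exact fadj.unit_naturality u

lemma alphaA_fac [fstar.Full] [fstar.Faithful] (K : F ⥤ X) (β : xsub ⟶ fsub ⋙ K) (e : E) :
    (alphaA fadj xadj i).app e ≫ (phiA fadj K β).app (fsub.obj e) = β.app e := by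
  dsimp [alphaA, phiA]
  rw [Adjunction.homEquiv_unit, assoc, β.naturality_assoc (sigmaA fadj xadj i e)]
  dsimp
  rw [← K.map_comp, fsub_sigmaA]
  simp only [assoc, IsIso.hom_inv_id, comp_id]
  have hn := β.naturality (xadj.counit.app e)
  dsimp at hn
  rw [← hn, xadj.right_triangle_components_assoc]
end Aux

/-- Right Kan extensions of points of a topos along connected geometric morphisms exist,
are pointwise, and have direct image `x_* ∘ f^*`: if `f^* ⊣ f_*` with `f^*` fully
faithful, `x^* ⊣ x_*`, and `g^*` satisfies `f^* ∘ g^* ≅ x^*`, then (i) `g^*` is left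
adjoint to `x_* ∘ f^*`, and (ii) `x_* ∘ f^*` is a left Kan extension of `x_*` along
`f_*`. -/
theorem statement8 {E : Type v₁} [Category.{w₁} E] {F : Type v₂} [Category.{w₂} F]
    {X : Type v₃} [Category.{w₃} X]
    (fstar : F ⥤ E) (fsub : E ⥤ F) (fadj : fstar ⊣ fsub)
    [fstar.Full] [fstar.Faithful]
    (xstar : X ⥤ E) (xsub : E ⥤ X) (xadj : xstar ⊣ xsub)
    (gstar : X ⥤ F) (i : gstar ⋙ fstar ≅ xstar) :
    Nonempty (gstar ⊣ fstar ⋙ xsub) ∧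
    ∃ α : xsub ⟶ fsub ⋙ (fstar ⋙ xsub), (fstar ⋙ xsub).IsLeftKanExtension α := by
  have hff : fstar.FullyFaithful := Functor.FullyFaithful.ofFullyFaithful fstar
  constructor
  · exact ⟨xadj.restrictFullyFaithful (Functor.FullyFaithful.id X) hff
      (Functor.leftUnitor xstar ≪≫ i.symm) (Functor.rightUnitor (fstar ⋙ xsub)).symm⟩
  · refine ⟨alphaA fadj xadj i, ⟨⟨Limits.IsInitial.ofUniqueHom
      (fun Y => StructuredArrow.homMk (phiA fadj Y.right Y.hom)
        (by ext e; exact alphaA_fac fadj xadj i Y.right Y.hom e)) ?_⟩⟩⟩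
    intro Y m
    refine StructuredArrow.hom_ext _ _ ?_
    ext f
    have w := NatTrans.congr_app (StructuredArrow.w m) (fstar.obj f)
    dsimp at w
    rw [show StructuredArrow.hom (Functor.LeftExtension.mk _ (alphaA fadj xadj i)) =
      alphaA fadj xadj i from rfl, alphaA_app_fstar] at w
    dsimp [phiA]
    have hn := m.right.naturality (inv (fadj.unit.app f))
    dsimp at hn
    change xsub.map (fstar.map (inv (fadj.unit.app f))) ≫ m.right.app f = _ at hn
    change m.right.app f = Y.hom.app (fstar.obj f) ≫ Y.right.map (inv (fadj.unit.app f))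
    have key : ∀ (r : fstar ⋙ xsub ⟶ Y.right),
        xsub.map (fstar.map (inv (fadj.unit.app f))) ≫ r.app f =
          r.app (fsub.obj (fstar.obj f)) ≫ Y.right.map (inv (fadj.unit.app f)) →
        r.app f = (xsub.map (fstar.map (fadj.unit.app f)) ≫ r.app (fsub.obj (fstar.obj f))) ≫
          Y.right.map (inv (fadj.unit.app f)) := by
      intro r hr
      rw [assoc, ← hr, ← Functor.map_comp_assoc]
      simp [← Functor.map_comp_assoc]
    rw [← w]
    exact key m.right hn
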